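/- Let n and T be positive integers, let X ⊆ {0,1}^n be a nonempty finite set, and let Y = conv(X) ⊆ [0,1]^n be its convex hull. Let α ∈ (0,1]. For each t ∈ {1,…,T} let f_t : {0,1}^n → ℝ be nonnegative, let f̃_t : Y → ℝ be continuous, and suppose f̃_t(x) ≥ f_t(x) for every x ∈ X. Let (Ω, μ) be a probability space, and for each t let y_t ∈ Y and let x_t : Ω → X be a measurable map satisfying ∫_Ω f_t(x_t(ω)) dμ(ω) ≥ α · f̃_t(y_t). Then α · max_{x ∈ X} Σ_{t=1}^T f_t(x) − ∫_Ω Σ_{t=1}^T f_t(x_t(ω)) dμ(ω) ≤ α · ( max_{y ∈ Y} Σ_{t=1}^T f̃_t(y) − Σ_{t=1}^T f̃_t(y_t) ). -/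

import Mathlib

open MeasureTheory

/-- Static reduction of online submodular maximization to OCO (paper's Theorem 2):
under the sandwich property, the α-regret on the combinatorial domain `X` is at most
`α` times the regret of the fractional policy on `Y = conv X`. -/
theorem osm_to_oco_static
    (n T : ℕ) (hn : 0 < n) (hT : 0 < T)
    (X : Finset (Fin n → ℝ)) (hXne : X.Nonempty)
    (hX01 : ∀ x ∈ X, ∀ i, x i = 0 ∨ x i = 1)
    (α : ℝ) (hα0 : 0 < α) (hα1 : α ≤ 1)
    (f : ℕ → (Fin n → ℝ) → ℝ)
    (hfnonneg : ∀ t, ∀ x : Fin n → ℝ, (∀ i, x i = 0 ∨ x i = 1) → 0 ≤ f t x)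
    (ftil : ℕ → (Fin n → ℝ) → ℝ)
    (hftilcont : ∀ t, ContinuousOn (ftil t) (convexHull ℝ (X : Set (Fin n → ℝ))))
    (hsandwich : ∀ t, ∀ x ∈ X, f t x ≤ ftil t x)
    (Ω : Type*) [MeasurableSpace Ω] (μ : Measure Ω) [IsProbabilityMeasure μ]
    (y : ℕ → (Fin n → ℝ)) (hy : ∀ t, y t ∈ convexHull ℝ (X : Set (Fin n → ℝ)))
    (xt : ℕ → Ω → (Fin n → ℝ)) (hxtmeas : ∀ t, Measurable (xt t))
    (hxtX : ∀ t ω, xt t ω ∈ X)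
    (hround : ∀ t, α * ftil t (y t) ≤ ∫ ω, f t (xt t ω) ∂μ) :
    α * sSup ((fun x => ∑ t ∈ Finset.range T, f t x) '' (X : Set (Fin n → ℝ)))
        - ∫ ω, ∑ t ∈ Finset.range T, f t (xt t ω) ∂μ
      ≤ α * (sSup ((fun z => ∑ t ∈ Finset.range T, ftil t z) ''
              (convexHull ℝ (X : Set (Fin n → ℝ))))
            - ∑ t ∈ Finset.range T, ftil t (y t)) := by
  set S : Set (Fin n → ℝ) := (X : Set (Fin n → ℝ)) with hSdef
  have hS : S ⊆ convexHull ℝ S := subset_convexHull ℝ S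
  have hcomp : IsCompact (convexHull ℝ S) := X.finite_toSet.isCompact_convexHull (𝕜 := ℝ)
  have hcont : ContinuousOn (fun z => ∑ t ∈ Finset.range T, ftil t z) (convexHull ℝ S) :=
    continuousOn_finset_sum _ (fun t _ => hftilcont t)
  have hbdd : BddAbove ((fun z => ∑ t ∈ Finset.range T, ftil t z) '' convexHull ℝ S) :=
    (hcomp.image_of_continuousOn hcont).bddAbove
  obtain ⟨x0, hx0⟩ := hXne
  have hx0S : x0 ∈ S := hx0
  have hMle : sSup ((fun x => ∑ t ∈ Finset.range T, f t x) '' S)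
      ≤ sSup ((fun z => ∑ t ∈ Finset.range T, ftil t z) '' convexHull ℝ S) := by
    apply csSup_le (Set.Nonempty.image _ ⟨x0, hx0S⟩)
    rintro v ⟨x, hx, rfl⟩
    calc ∑ t ∈ Finset.range T, f t x ≤ ∑ t ∈ Finset.range T, ftil t x :=
        Finset.sum_le_sum (fun t _ => hsandwich t x hx)
      _ ≤ _ := le_csSup hbdd ⟨x, hS hx, rfl⟩
  have hint : ∀ t, Integrable (fun ω => f t (xt t ω)) μ := by
    intro t
    have heq : (fun ω => f t (xt t ω)) =
        fun ω => ∑ x ∈ X, Set.indicator (xt t ⁻¹' {x}) (fun _ => f t x) ω := by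
      funext ω
      rw [Finset.sum_eq_single (xt t ω)]
      · simp [Set.indicator]
      · intro b _ hb
        simp only [Set.indicator, Set.mem_preimage, Set.mem_singleton_iff]
        rw [if_neg (fun h => hb h.symm)]
      · intro h; exact absurd (hxtX t ω) h
    rw [heq]
    apply integrable_finset_sum
    intro x _
    exact (integrable_const (f t x)).indicator ((hxtmeas t) (measurableSet_singleton x))
  have hintsum : ∫ ω, ∑ t ∈ Finset.range T, f t (xt t ω) ∂μ =
      ∑ t ∈ Finset.range T, ∫ ω, f t (xt t ω) ∂μ :=
    integral_finset_sum _ (fun t _ => hint t)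
  have hlower : α * ∑ t ∈ Finset.range T, ftil t (y t)
      ≤ ∫ ω, ∑ t ∈ Finset.range T, f t (xt t ω) ∂μ := by
    rw [hintsum, Finset.mul_sum]
    exact Finset.sum_le_sum (fun t _ => hround t)
  have hmul := mul_le_mul_of_nonneg_left hMle hα0.le
  rw [mul_sub]
  linarith
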